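/- If G is a connected unicyclic graph on n vertices with α(G) + μ(G) = n − 1 and unique cycle C, then core(G) = ⋃_{x ∈ N₁(C)} core(T_x), where the union is over vertices x outside C adjacent to C and T_x is the tree component of G minus the edge joining x to C that contains x. -/

import Mathlib

/-- A set of vertices is independent if no two of its vertices are adjacent. -/
def SimpleGraph.IsIndepSet' {V : Type*} (G : SimpleGraph V) (s : Set V) : Prop :=
  s.Pairwise (fun a b => ¬ G.Adj a b)

/-- The independence number: the maximum cardinality of an independent set. -/
noncomputable def indepNum {V : Type*} (G : SimpleGraph V) : ℕ :=
  sSup {n | ∃ s : Set V, G.IsIndepSet' s ∧ s.ncard = n}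

/-- The matching number: the maximum cardinality of a matching. -/
noncomputable def matchNum {V : Type*} (G : SimpleGraph V) : ℕ :=
  sSup {n | ∃ M : SimpleGraph.Subgraph G, M.IsMatching ∧ M.edgeSet.ncard = n}

/-- A maximum independent set. -/
def IsMaxIndepSet {V : Type*} (G : SimpleGraph V) (s : Set V) : Prop :=
  G.IsIndepSet' s ∧ s.ncard = indepNum G

/-- The core: intersection of all maximum independent sets. -/
noncomputable def core {V : Type*} (G : SimpleGraph V) : Set V :=
  ⋂₀ {s | IsMaxIndepSet G s}

/-- Open neighborhood of a set. -/
def nbhdSet {V : Type*} (G : SimpleGraph V) (s : Set V) : Set V :=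
  {v | ∃ w ∈ s, G.Adj v w}

/-- Closed neighborhood of a set. -/
def closedNbhdSet {V : Type*} (G : SimpleGraph V) (s : Set V) : Set V :=
  s ∪ nbhdSet G s

/-- The tree component of `G - xy` containing `x`. -/
noncomputable def treeComp {V : Type*} (G : SimpleGraph V) (x y : V) :
    SimpleGraph ((G.deleteEdges {s(x,y)}).connectedComponentMk x).supp :=
  (G.deleteEdges {s(x,y)}).induce ((G.deleteEdges {s(x,y)}).connectedComponentMk x).supp


namespace StmtAux
open SimpleGraph Set

variable {V : Type*} [Fintype V]

/-- relative independence number -/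
noncomputable def aN (G : SimpleGraph V) (A : Set V) : ℕ :=
  sSup {n | ∃ s, s ⊆ A ∧ G.IsIndepSet' s ∧ s.ncard = n}

/-- family of pairwise disjoint edges inside A -/
def Fam (G : SimpleGraph V) (A : Set V) (F : Set (Sym2 V)) : Prop :=
  F ⊆ G.edgeSet ∧ (∀ e ∈ F, ∀ z, z ∈ e → z ∈ A) ∧
    (∀ e ∈ F, ∀ f ∈ F, e ≠ f → ∀ z, z ∈ e → z ∉ f)

noncomputable def bN (G : SimpleGraph V) (A : Set V) : ℕ :=
  sSup {n | ∃ F, Fam G A F ∧ F.ncard = n}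

def relMIS (G : SimpleGraph V) (A : Set V) (s : Set V) : Prop :=
  s ⊆ A ∧ G.IsIndepSet' s ∧ s.ncard = aN G A

def relCore (G : SimpleGraph V) (A : Set V) : Set V :=
  {w | w ∈ A ∧ ∀ s, relMIS G A s → w ∈ s}

variable {G : SimpleGraph V} {A B : Set V}

lemma aN_bdd : BddAbove {n | ∃ s, s ⊆ A ∧ G.IsIndepSet' s ∧ s.ncard = n} := by
  refine ⟨Fintype.card V, ?_⟩
  rintro n ⟨s, -, -, rfl⟩
  simpa [Set.ncard_univ] using Set.ncard_le_ncard (Set.subset_univ s) Set.finite_univ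

lemma aN_le {s : Set V} (hs : s ⊆ A) (hi : G.IsIndepSet' s) : s.ncard ≤ aN G A :=
  le_csSup aN_bdd ⟨s, hs, hi, rfl⟩

lemma exists_aN (G : SimpleGraph V) (A : Set V) : ∃ s, relMIS G A s := by
  have hne : Set.Nonempty {n | ∃ s, s ⊆ A ∧ G.IsIndepSet' s ∧ s.ncard = n} :=
    ⟨0, ∅, Set.empty_subset _, by simp [SimpleGraph.IsIndepSet'], by simp⟩
  obtain ⟨s, hsA, hsi, hcard⟩ := Nat.sSup_mem hne aN_bdd
  exact ⟨s, hsA, hsi, hcard⟩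

lemma aN_mono (h : A ⊆ B) : aN G A ≤ aN G B := by
  obtain ⟨s, hsA, hsi, hcard⟩ := exists_aN G A
  rw [← hcard]; exact aN_le (hsA.trans h) hsi

lemma bN_bdd : BddAbove {n | ∃ F, Fam G A F ∧ F.ncard = n} := by
  refine ⟨Nat.card (Sym2 V), ?_⟩
  rintro n ⟨F, -, rfl⟩
  simpa [Set.ncard_univ] using Set.ncard_le_ncard (Set.subset_univ F) Set.finite_univ

lemma bN_le {F : Set (Sym2 V)} (hF : Fam G A F) : F.ncard ≤ bN G A :=
  le_csSup bN_bdd ⟨F, hF, rfl⟩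

lemma exists_bN (G : SimpleGraph V) (A : Set V) : ∃ F, Fam G A F ∧ F.ncard = bN G A := by
  have hne : Set.Nonempty {n | ∃ F, Fam G A F ∧ F.ncard = n} :=
    ⟨0, ∅, ⟨Set.empty_subset _, by simp, by simp⟩, by simp⟩
  exact Nat.sSup_mem hne bN_bdd

lemma bN_mono (h : A ⊆ B) : bN G A ≤ bN G B := by
  obtain ⟨F, ⟨h1, h2, h3⟩, hcard⟩ := exists_bN G A
  rw [← hcard]; exact bN_le ⟨h1, fun e he z hz => h (h2 e he z hz), h3⟩

lemma indepNum_eq_aN : _root_.indepNum G = aN G univ := by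
  unfold _root_.indepNum aN
  congr 1
  ext n
  constructor
  · rintro ⟨s, hi, rfl⟩; exact ⟨s, Set.subset_univ s, hi, rfl⟩
  · rintro ⟨s, -, hi, rfl⟩; exact ⟨s, hi, rfl⟩

lemma core_eq_relCore : core G = relCore G univ := by
  ext w
  simp only [core, relCore, Set.mem_sInter, Set.mem_setOf_eq, Set.mem_univ, true_and]
  constructor
  · intro h s hs
    exact h s ⟨hs.2.1, by rw [hs.2.2, indepNum_eq_aN]⟩
  · intro h s hs
    exact h s ⟨Set.subset_univ s, hs.1, by rw [hs.2, ← indepNum_eq_aN]⟩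

lemma relCore_aN_pos {z : V} (hz : z ∈ relCore G A) : 1 ≤ aN G A := by
  obtain ⟨s, hs⟩ := exists_aN G A
  have hzs := hz.2 s hs
  have : 1 ≤ s.ncard := by
    rw [Nat.one_le_iff_ne_zero]
    intro h0
    rw [Set.ncard_eq_zero s.toFinite] at h0
    simp [h0] at hzs
  calc 1 ≤ s.ncard := this
    _ = aN G A := hs.2.2

lemma aN_diff_add_one_of_mem_relCore {z : V} (hz : z ∈ relCore G A) :
    aN G (A \ {z}) + 1 = aN G A := by
  have h1 : aN G (A \ {z}) + 1 ≤ aN G A := by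
    rcases Nat.lt_or_ge (aN G (A \ {z})) (aN G A) with h | h
    · omega
    · -- a MIS of A\{z} would be a MIS of A avoiding z
      exfalso
      obtain ⟨s, hsA, hsi, hcard⟩ := exists_aN G (A \ {z})
      have hle : s.ncard ≤ aN G A := aN_le (hsA.trans (Set.diff_subset)) hsi
      have : relMIS G A s := ⟨hsA.trans (Set.diff_subset), hsi, by omega⟩
      have := hz.2 s this
      exact (hsA this).2 rfl
  have h2 : aN G A ≤ aN G (A \ {z}) + 1 := by
    obtain ⟨s, hsA, hsi, hcard⟩ := exists_aN G A
    have : (s \ {z}).ncard ≤ aN G (A \ {z}) :=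
      aN_le (Set.diff_subset_diff_left hsA) (hsi.mono Set.diff_subset)
    have h3 : s.ncard ≤ (s \ {z}).ncard + 1 := by
      have := Set.ncard_diff_singleton_add_one (s := s) (a := z)
      rcases Classical.em (z ∈ s) with hzs | hzs
      · rw [Set.ncard_diff_singleton_add_one hzs s.toFinite]
      · rw [Set.diff_singleton_eq_self hzs]; omega
    omega
  omega

lemma aN_le_diff_add_one {z : V} : aN G A ≤ aN G (A \ {z}) + 1 := by
  obtain ⟨s, hsA, hsi, hcard⟩ := exists_aN G A
  have : (s \ {z}).ncard ≤ aN G (A \ {z}) :=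
    aN_le (Set.diff_subset_diff_left hsA) (hsi.mono Set.diff_subset)
  have h3 : s.ncard ≤ (s \ {z}).ncard + 1 := by
    rcases Classical.em (z ∈ s) with hzs | hzs
    · rw [Set.ncard_diff_singleton_add_one hzs s.toFinite]
    · rw [Set.diff_singleton_eq_self hzs]; omega
  omega

lemma exists_relMIS_not_mem {z : V} (hzA : z ∈ A) (hz : z ∉ relCore G A) :
    ∃ s, relMIS G A s ∧ z ∉ s := by
  by_contra h
  push_neg at h
  exact hz ⟨hzA, fun s hs => h s hs⟩

end StmtAux

namespace StmtAux
open SimpleGraph Set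

variable {V : Type*} [Fintype V] {G : SimpleGraph V} {A : Set V}

lemma matchNum_eq_bN : matchNum G = bN G univ := by
  unfold matchNum bN
  congr 1
  ext n
  constructor
  · rintro ⟨M, hM, rfl⟩
    refine ⟨M.edgeSet, ⟨M.edgeSet_subset, by simp, ?_⟩, rfl⟩
    intro e he f hf hef z hze hzf
    obtain ⟨a, rfl⟩ := Sym2.mem_iff_exists.mp hze
    obtain ⟨b, rfl⟩ := Sym2.mem_iff_exists.mp hzf
    have ha : M.Adj z a := Subgraph.mem_edgeSet.mp he
    have hb : M.Adj z b := Subgraph.mem_edgeSet.mp hf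
    obtain ⟨w, -, hw⟩ := hM (M.edge_vert ha)
    exact hef (by rw [hw a ha, hw b hb])
  · rintro ⟨F, ⟨hFsub, -, hFdisj⟩, rfl⟩
    refine ⟨{ verts := {v | ∃ e ∈ F, v ∈ e},
              Adj := fun u w => s(u,w) ∈ F,
              adj_sub := fun h => (SimpleGraph.mem_edgeSet G).mp (hFsub h),
              edge_vert := fun h => ⟨_, h, Sym2.mem_mk_left _ _⟩,
              symm := ⟨fun u w h => by change s(u,w) ∈ F at h; change s(w,u) ∈ F; rwa [Sym2.eq_swap]⟩ }, ?_, ?_⟩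
    · rintro v ⟨e, heF, hve⟩
      obtain ⟨w, rfl⟩ := Sym2.mem_iff_exists.mp hve
      refine ⟨w, heF, ?_⟩
      intro y hy
      by_contra hne
      have hne' : s(v, y) ≠ s(v, w) := fun h => hne (Sym2.congr_right.mp h)
      exact hFdisj _ hy _ heF hne' v (Sym2.mem_mk_left _ _) (Sym2.mem_mk_left _ _)
    · congr 1
      ext e
      induction e with
      | _ u w => exact Subgraph.mem_edgeSet

lemma indep_image {t : Set ↥A} (ht : (G.induce A).IsIndepSet' t) :
    G.IsIndepSet' (Subtype.val '' t) := by
  rintro a ⟨a', ha', rfl⟩ b ⟨b', hb', rfl⟩ hne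
  have : a' ≠ b' := fun h => hne (by rw [h])
  have := ht ha' hb' this
  simpa [SimpleGraph.comap] using this

lemma indep_preimage {s : Set V} (h : G.IsIndepSet' s) :
    (G.induce A).IsIndepSet' (Subtype.val ⁻¹' s) := by
  intro a' ha' b' hb' hne
  have : (a' : V) ≠ (b' : V) := fun hh => hne (Subtype.val_injective hh)
  have := h ha' hb' this
  simpa [SimpleGraph.comap] using this

lemma indepNum_induce : _root_.indepNum (G.induce A) = aN G A := by
  unfold _root_.indepNum aN
  congr 1
  ext n
  constructor
  · rintro ⟨t, ht, rfl⟩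
    exact ⟨Subtype.val '' t, by simpa using Subtype.coe_image_subset A t, indep_image ht,
      Set.ncard_image_of_injective t Subtype.val_injective⟩
  · rintro ⟨s, hsA, hsi, rfl⟩
    refine ⟨Subtype.val ⁻¹' s, indep_preimage hsi, ?_⟩
    have himg : Subtype.val '' (Subtype.val ⁻¹' s : Set ↥A) = s := by
      rw [Subtype.image_preimage_coe]
      exact Set.inter_eq_right.mpr hsA
    calc (Subtype.val ⁻¹' s : Set ↥A).ncard
        = (Subtype.val '' (Subtype.val ⁻¹' s : Set ↥A)).ncard :=
          (Set.ncard_image_of_injective _ Subtype.val_injective).symm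
      _ = s.ncard := by rw [himg]

lemma isMaxIndep_induce_iff {t : Set ↥A} :
    IsMaxIndepSet (G.induce A) t ↔ relMIS G A (Subtype.val '' t) := by
  constructor
  · rintro ⟨ht, hcard⟩
    exact ⟨by simpa using Subtype.coe_image_subset A t, indep_image ht,
      by rw [Set.ncard_image_of_injective t Subtype.val_injective, hcard, indepNum_induce]⟩
  · rintro ⟨hsub, hind, hcard⟩
    constructor
    · intro a' ha' b' hb' hne
      have : (a':V) ≠ (b':V) := fun hh => hne (Subtype.val_injective hh)
      have := hind ⟨a', ha', rfl⟩ ⟨b', hb', rfl⟩ this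
      simpa [SimpleGraph.comap] using this
    · rw [indepNum_induce, ← hcard, Set.ncard_image_of_injective t Subtype.val_injective]

lemma core_induce : Subtype.val '' core (G.induce A) = relCore G A := by
  ext w
  constructor
  · rintro ⟨w', hw', rfl⟩
    refine ⟨w'.2, ?_⟩
    intro s hs
    have hsA := hs.1
    have ht : IsMaxIndepSet (G.induce A) (Subtype.val ⁻¹' s) := by
      rw [isMaxIndep_induce_iff]
      have himg : Subtype.val '' (Subtype.val ⁻¹' s : Set ↥A) = s := by
        rw [Subtype.image_preimage_coe]; exact Set.inter_eq_right.mpr hsA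
      rw [himg]; exact hs
    exact hw' _ ht
  · rintro ⟨hwA, hw⟩
    refine ⟨⟨w, hwA⟩, ?_, rfl⟩
    intro t ht
    have := hw _ (isMaxIndep_induce_iff.mp ht)
    obtain ⟨w', hw't, hww⟩ := this
    rwa [show w' = ⟨w, hwA⟩ from Subtype.val_injective hww] at hw't

end StmtAux

namespace StmtAux
open SimpleGraph Set

variable {V : Type*} [Fintype V] {G : SimpleGraph V} {A : Set V}

/-- no cycle of G lies entirely inside `A` -/
def NoCyc (G : SimpleGraph V) (A : Set V) : Prop :=
  ∀ ⦃u : V⦄ (d : G.Walk u u), d.IsCycle → ¬(∀ z ∈ d.support, z ∈ A)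

lemma NoCyc.mono {B : Set V} (h : NoCyc G B) (hAB : A ⊆ B) : NoCyc G A :=
  fun _ d hd hall => h d hd (fun z hz => hAB (hall z hz))

lemma concat_isPath {a b z : V} {p : G.Walk a b} (hp : p.IsPath) (h : G.Adj b z)
    (hz : z ∉ p.support) : (p.concat h).IsPath := by
  have h1 : (Walk.cons h.symm p.reverse).IsPath := by
    rw [Walk.cons_isPath_iff]
    exact ⟨hp.reverse, by simpa [Walk.support_reverse] using hz⟩
  have h2 := h1.reverse
  rwa [← Walk.reverse_concat, Walk.reverse_reverse] at h2

lemma end_unique_nbr {b a : V} (r : G.Walk b a) (hr : r.IsPath) (hnil : ¬r.Nil) :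
    ∃ w, G.Adj b w ∧ w ∈ r.support ∧ ∀ z, s(b, z) ∈ r.edges → z = w := by
  cases r with
  | nil => simp at hnil
  | @cons _ v _ h q =>
    refine ⟨v, h, by simp, ?_⟩
    intro z hz
    rw [Walk.edges_cons, List.mem_cons] at hz
    rcases hz with hz | hz
    · rw [Sym2.eq_iff] at hz
      rcases hz with ⟨-, rfl⟩ | ⟨hbv, rfl⟩
      · rfl
      · exact absurd hbv h.ne
    · exfalso
      rw [Walk.cons_isPath_iff] at hr
      exact hr.2 (q.fst_mem_support_of_mem_edges hz)

lemma exists_leaf (hA : NoCyc G A) (hE : ∃ u w, u ∈ A ∧ w ∈ A ∧ G.Adj u w) :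
    ∃ u w, u ∈ A ∧ w ∈ A ∧ G.Adj u w ∧ ∀ z ∈ A, G.Adj u z → z = w := by
  classical
  obtain ⟨u0, w0, hu0, hw0, h0⟩ := hE
  set L : Set ℕ :=
    {k | ∃ (a b : V) (p : G.Walk a b), p.IsPath ∧ (∀ z ∈ p.support, z ∈ A) ∧ p.length = k} with hL
  have hbdd : BddAbove L := by
    refine ⟨Fintype.card V, ?_⟩
    rintro k ⟨a, b, p, hp, -, rfl⟩
    exact hp.length_lt.le
  have hone : (1 : ℕ) ∈ L := by
    refine ⟨u0, w0, Walk.cons h0 Walk.nil, ?_, ?_, by simp⟩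
    · rw [Walk.cons_isPath_iff]; simpa using h0.ne
    · intro z hz
      simp only [Walk.support_cons, Walk.support_nil, List.mem_cons, List.mem_singleton,
        List.not_mem_nil, or_false] at hz
      rcases hz with rfl | rfl
      · exact hu0
      · exact hw0
  obtain ⟨a, b, p, hp, hsup, hlen⟩ := Nat.sSup_mem ⟨1, hone⟩ hbdd
  have hmax : ∀ k ∈ L, k ≤ p.length := by
    intro k hk; rw [hlen]; exact le_csSup hbdd hk
  have hnil : ¬p.Nil := by
    rw [Walk.not_nil_iff_lt_length]
    have := hmax 1 hone
    omega
  -- every A-neighbour of b gives an edge of p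
  have hedge : ∀ z ∈ A, G.Adj b z → s(b, z) ∈ p.edges := by
    intro z hzA hadj
    by_cases hzs : z ∈ p.support
    · by_contra hne
      have hd : (Walk.cons hadj (p.dropUntil z hzs)).IsCycle := by
        rw [Walk.cons_isCycle_iff]
        exact ⟨hp.dropUntil hzs, fun hmem => hne (Walk.edges_dropUntil_subset _ _ hmem)⟩
      refine hA _ hd ?_
      intro t ht
      rw [Walk.support_cons, List.mem_cons] at ht
      rcases ht with rfl | ht
      · exact hsup _ (p.end_mem_support)
      · exact hsup _ (Walk.support_dropUntil_subset _ _ ht)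
    · exfalso
      have hq : (p.concat hadj).IsPath := concat_isPath hp hadj hzs
      have : p.length + 1 ∈ L := by
        refine ⟨a, z, p.concat hadj, hq, ?_, by rw [Walk.length_concat]⟩
        intro t ht
        rw [Walk.support_concat, List.mem_append] at ht
        rcases ht with ht | ht
        · exact hsup _ ht
        · simp only [List.mem_singleton] at ht; subst ht; exact hzA
      have := hmax _ this
      omega
  obtain ⟨w, hbw, hws, hwu⟩ := end_unique_nbr p.reverse hp.reverse
    (by rw [Walk.not_nil_iff_lt_length, Walk.length_reverse]
        rw [Walk.not_nil_iff_lt_length] at hnil; exact hnil)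
  refine ⟨b, w, hsup _ p.end_mem_support, ?_, hbw, ?_⟩
  · rw [Walk.support_reverse, List.mem_reverse] at hws
    exact hsup _ hws
  · intro z hzA hadj
    refine hwu z ?_
    rw [Walk.edges_reverse, List.mem_reverse]
    exact hedge z hzA hadj

lemma aN_le_ncard : aN G A ≤ A.ncard := by
  obtain ⟨s, hsA, -, hcard⟩ := exists_aN G A
  rw [← hcard]
  exact Set.ncard_le_ncard hsA A.toFinite

lemma forest_KE : ∀ (n : ℕ) (A : Set V), A.ncard = n → NoCyc G A → aN G A + bN G A = n := by
  intro n
  induction n using Nat.strong_induction_on with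
  | _ n ih =>
    intro A hn hA
    by_cases hE : ∃ u w, u ∈ A ∧ w ∈ A ∧ G.Adj u w
    · obtain ⟨u, w, huA, hwA, huw, hleaf⟩ := exists_leaf hA hE
      have hne : u ≠ w := huw.ne
      set A' := A \ {u, w} with hA'
      have hsubUW : ({u, w} : Set V) ⊆ A := by
        intro z hz; rcases hz with rfl | rfl
        · exact huA
        · exact hwA
      have hcard2 : ({u, w} : Set V).ncard = 2 := Set.ncard_pair hne
      have hcardle : ({u, w} : Set V).ncard ≤ A.ncard := Set.ncard_le_ncard hsubUW A.toFinite
      have hcard' : A'.ncard + 2 = n := by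
        rw [hA', Set.ncard_diff hsubUW, hcard2, hn]
        rw [hcard2, hn] at hcardle
        omega
      have hA'sub : A' ⊆ A := Set.diff_subset
      have hNC' : NoCyc G A' := hA.mono hA'sub
      -- independence step
      have h1 : aN G A' + 1 ≤ aN G A := by
        obtain ⟨s, hsA, hsi, hcard⟩ := exists_aN G A'
        have huns : u ∉ s := fun hus => (hsA hus).2 (by simp)
        have hins : G.IsIndepSet' (insert u s) := by
          rw [SimpleGraph.IsIndepSet', Set.pairwise_insert]
          refine ⟨hsi, ?_⟩
          intro z hzs hzu
          have hz : ¬G.Adj u z := by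
            intro hadj
            have := hleaf z (hA'sub (hsA hzs)) hadj
            exact (hsA hzs).2 (by simp [this])
          exact ⟨fun h => hz h, fun h => hz h.symm⟩
        have : (insert u s).ncard = s.ncard + 1 :=
          Set.ncard_insert_of_notMem huns s.toFinite
        have hle := aN_le (G := G) (A := A)
          (s := insert u s) (by
            intro z hz
            rcases hz with rfl | hz
            · exact huA
            · exact hA'sub (hsA hz)) hins
        omega
      have h2 : aN G A ≤ aN G A' + 1 := by
        obtain ⟨s, hsA, hsi, hcard⟩ := exists_aN G A
        have hnotboth : ¬(u ∈ s ∧ w ∈ s) := by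
          rintro ⟨hu, hw⟩
          exact hsi hu hw hne huw
        have hsub' : s \ {u, w} ⊆ A' := Set.diff_subset_diff_left hsA
        have hind' : G.IsIndepSet' (s \ {u, w}) := hsi.mono Set.diff_subset
        have hle := aN_le hsub' hind'
        have hdiffcard : s.ncard ≤ (s \ {u, w}).ncard + 1 := by
          by_cases hu : u ∈ s
          · have hw : w ∉ s := fun hw => hnotboth ⟨hu, hw⟩
            have : s \ {u, w} = s \ {u} := by
              ext z; simp only [Set.mem_diff, Set.mem_insert_iff, Set.mem_singleton_iff]
              constructor
              · rintro ⟨hz, h2⟩; exact ⟨hz, fun h => h2 (Or.inl h)⟩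
              · rintro ⟨hz, h2⟩
                refine ⟨hz, ?_⟩
                rintro (rfl | rfl)
                · exact h2 rfl
                · exact hw hz
            rw [this, Set.ncard_diff_singleton_add_one hu s.toFinite]
          · by_cases hw : w ∈ s
            · have : s \ {u, w} = s \ {w} := by
                ext z; simp only [Set.mem_diff, Set.mem_insert_iff, Set.mem_singleton_iff]
                constructor
                · rintro ⟨hz, h2⟩; exact ⟨hz, fun h => h2 (Or.inr h)⟩
                · rintro ⟨hz, h2⟩
                  refine ⟨hz, ?_⟩
                  rintro (rfl | rfl)
                  · exact hu hz
                  · exact h2 rfl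
              rw [this, Set.ncard_diff_singleton_add_one hw s.toFinite]
            · have : s \ {u, w} = s := by
                ext z; simp only [Set.mem_diff, Set.mem_insert_iff, Set.mem_singleton_iff]
                constructor
                · exact fun h => h.1
                · intro hz
                  refine ⟨hz, ?_⟩
                  rintro (rfl | rfl)
                  · exact hu hz
                  · exact hw hz
              rw [this]; omega
        omega
      -- matching step
      have h3 : bN G A' + 1 ≤ bN G A := by
        obtain ⟨F, ⟨hF1, hF2, hF3⟩, hcard⟩ := exists_bN G A'
        have hnew : s(u, w) ∉ F := by
          intro hmem
          have := hF2 _ hmem u (by simp)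
          exact this.2 (by simp)
        have hFam : Fam G A (insert s(u, w) F) := by
          refine ⟨?_, ?_, ?_⟩
          · intro e he
            rcases he with rfl | he
            · exact huw
            · exact hF1 he
          · intro e he z hz
            rcases he with rfl | he
            · rcases Sym2.mem_iff.mp hz with rfl | rfl
              · exact huA
              · exact hwA
            · exact hA'sub (hF2 _ he z hz)
          · intro e he f hf hef z hze hzf
            rcases he with rfl | he <;> rcases hf with rfl | hf
            · exact hef rfl
            · rcases Sym2.mem_iff.mp hze with rfl | rfl
              · exact (hF2 _ hf z hzf).2 (by simp)
              · exact (hF2 _ hf z hzf).2 (by simp)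
            · rcases Sym2.mem_iff.mp hzf with h' | h'
              · exact absurd (h' ▸ hF2 _ he z hze).2 (by simp [h'])
              · exact absurd (h' ▸ hF2 _ he z hze).2 (by simp [h'])
            · exact hF3 e he f hf hef z hze hzf
        have hc : (insert s(u, w) F).ncard = F.ncard + 1 :=
          Set.ncard_insert_of_notMem hnew F.toFinite
        have := bN_le hFam
        omega
      have h4 : bN G A ≤ bN G A' + 1 := by
        obtain ⟨F, ⟨hF1, hF2, hF3⟩, hcard⟩ := exists_bN G A
        set F' := {e ∈ F | w ∉ e} with hF'
        have hF'sub : F' ⊆ F := Set.sep_subset _ _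
        have hFam' : Fam G A' F' := by
          refine ⟨fun e he => hF1 (hF'sub he), ?_, ?_⟩
          · rintro e ⟨heF, hwe⟩ z hz
            refine ⟨hF2 _ heF z hz, ?_⟩
            intro hzuw
            rcases hzuw with rfl | rfl
            · -- z = u ∈ e; then e = s(u,t) with t adjacent to u, so t = w ∈ e
              obtain ⟨t, rfl⟩ := Sym2.mem_iff_exists.mp hz
              have hadj : G.Adj z t := (SimpleGraph.mem_edgeSet G).mp (hF1 heF)
              have htA : t ∈ A := hF2 _ heF t (by simp)
              have := hleaf t htA hadj
              exact hwe (by simp [this])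
            · exact hwe hz
          · intro e he f hf hef z hze hzf
            exact hF3 e (hF'sub he) f (hF'sub hf) hef z hze hzf
        have hcard' : F.ncard ≤ F'.ncard + 1 := by
          by_cases hex : ∃ e₀ ∈ F, w ∈ e₀
          · obtain ⟨e₀, he₀F, hwe₀⟩ := hex
            have : F' = F \ {e₀} := by
              ext e
              simp only [hF', Set.mem_setOf_eq, Set.mem_diff, Set.mem_singleton_iff]
              constructor
              · rintro ⟨heF, hwe⟩
                exact ⟨heF, fun h => hwe (h ▸ hwe₀)⟩
              · rintro ⟨heF, hne⟩
                refine ⟨heF, fun hwe => hne ?_⟩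
                by_contra hne'
                exact hF3 e heF e₀ he₀F hne' w hwe hwe₀
            rw [this, Set.ncard_diff_singleton_add_one he₀F F.toFinite]
          · have : F' = F := by
              ext e
              simp only [hF', Set.mem_setOf_eq]
              exact ⟨fun h => h.1, fun h => ⟨h, fun hw => hex ⟨e, h, hw⟩⟩⟩
            rw [this]; omega
        have := bN_le hFam'
        omega
      have hrec := ih (n - 2) (by omega) A' (by omega) hNC'
      omega
    · -- no edge inside A
      have hAind : G.IsIndepSet' A := by
        intro z₁ h₁ z₂ h₂ hne hadj
        exact hE ⟨z₁, z₂, h₁, h₂, hadj⟩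
      have ha1 : A.ncard ≤ aN G A := aN_le (le_refl _) hAind
      have ha2 : aN G A ≤ A.ncard := aN_le_ncard
      have hb : bN G A = 0 := by
        obtain ⟨F, ⟨hF1, hF2, -⟩, hcard⟩ := exists_bN G A
        have : F = ∅ := by
          rw [Set.eq_empty_iff_forall_notMem]
          intro e he
          induction e with
          | _ z t =>
            exact hE ⟨z, t, hF2 _ he z (by simp), hF2 _ he t (by simp),
              (SimpleGraph.mem_edgeSet G).mp (hF1 he)⟩
        rw [this] at hcard
        simp at hcard
        omega
      omega

end StmtAux

namespace StmtAux
open SimpleGraph Set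

variable {V : Type*} [Fintype V] {G : SimpleGraph V}

lemma reachable_delete_of_walk {u w : V}
    (hr : (G.deleteEdges {s(u,w)}).Reachable u w) {a b : V} (p : G.Walk a b) :
    (G.deleteEdges {s(u,w)}).Reachable a b := by
  induction p with
  | nil => exact Reachable.refl _
  | @cons a c b h q ih =>
    refine Reachable.trans ?_ ih
    by_cases he : s(a, c) = s(u, w)
    · rw [Sym2.eq_iff] at he
      rcases he with ⟨rfl, rfl⟩ | ⟨rfl, rfl⟩
      · exact hr
      · exact hr.symm
    · exact (SimpleGraph.deleteEdges_adj.mpr ⟨h, he⟩).reachable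

lemma connected_delete {u w : V} (hconn : G.Connected)
    (hr : (G.deleteEdges {s(u,w)}).Reachable u w) : (G.deleteEdges {s(u,w)}).Connected := by
  rw [connected_iff]
  refine ⟨fun a b => ?_, hconn.nonempty⟩
  exact reachable_delete_of_walk hr ((hconn a b).some)

lemma not_bridge_of_cycle {u : V} (d : G.Walk u u) (hd : d.IsCycle) {e : Sym2 V}
    (he : e ∈ d.edges) : ¬ G.IsBridge e := by
  rw [isBridge_iff_mem_and_forall_cycle_notMem]
  intro h
  exact h d hd he
  exact d.edges_subset_edgeSet he

lemma connected_delete_of_cycle_edge {u : V} (hconn : G.Connected) (d : G.Walk u u)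
    (hd : d.IsCycle) {a b : V} (hab : G.Adj a b) (he : s(a,b) ∈ d.edges) :
    (G.deleteEdges {s(a,b)}).Connected := by
  have hnb := not_bridge_of_cycle d hd he
  rw [isBridge_iff] at hnb
  push_neg at hnb
  exact connected_delete hconn hnb

lemma card_le_edges_add_one :
    ∀ (m : ℕ) (G : SimpleGraph V), G.edgeSet.ncard = m → G.Connected →
      Fintype.card V ≤ m + 1 := by
  intro m
  induction m using Nat.strong_induction_on with
  | _ m ih =>
    intro G hm hconn
    by_cases hac : G.IsAcyclic
    · have htree : G.IsTree := ⟨hconn, hac⟩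
      classical
      letI : Fintype G.edgeSet := Fintype.ofFinite _
      have h1 := htree.card_edgeFinset
      have h2 : G.edgeSet.ncard = G.edgeFinset.card := by
        rw [Set.ncard_eq_toFinset_card', show G.edgeSet.toFinset = G.edgeFinset by ext e; simp]
      have h3 : 1 ≤ Fintype.card V := Fintype.card_pos_iff.mpr hconn.nonempty
      omega
    · rw [SimpleGraph.IsAcyclic] at hac
      push_neg at hac
      obtain ⟨v0, d, hd⟩ := hac
      cases d with
      | nil => exact absurd hd (by intro h; exact h.not_nil Walk.nil_nil)
      | @cons _ c _ h q =>
        have hemem : s(v0, c) ∈ (Walk.cons h q).edges := by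
          rw [Walk.edges_cons]; exact List.mem_cons_self
        have hconn' := connected_delete_of_cycle_edge hconn _ hd h hemem
        have hedel : (G.deleteEdges {s(v0,c)}).edgeSet = G.edgeSet \ {s(v0,c)} :=
          edgeSet_deleteEdges _
        have hein : s(v0, c) ∈ G.edgeSet := h
        have hcard : (G.edgeSet \ {s(v0,c)}).ncard + 1 = m := by
          rw [Set.ncard_diff_singleton_add_one hein (G.edgeSet.toFinite)]
          exact hm
        have := ih (m - 1) (by omega) (G.deleteEdges {s(v0,c)})
          (by rw [hedel]; omega) hconn'
        omega

lemma card_le_edges_of_cycle {u : V} (hconn : G.Connected) (d : G.Walk u u) (hd : d.IsCycle) :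
    Fintype.card V ≤ G.edgeSet.ncard := by
  cases d with
  | nil => exact absurd hd (by intro h; exact h.not_nil Walk.nil_nil)
  | @cons _ c _ h q =>
    have hemem : s(u, c) ∈ (Walk.cons h q).edges := by
      rw [Walk.edges_cons]; exact List.mem_cons_self
    have hconn' := connected_delete_of_cycle_edge hconn _ hd h hemem
    have hedel : (G.deleteEdges {s(u,c)}).edgeSet = G.edgeSet \ {s(u,c)} :=
      edgeSet_deleteEdges _
    have hein : s(u, c) ∈ G.edgeSet := h
    have hcard : (G.edgeSet \ {s(u,c)}).ncard + 1 = G.edgeSet.ncard :=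
      Set.ncard_diff_singleton_add_one hein (G.edgeSet.toFinite)
    have := card_le_edges_add_one ((G.deleteEdges {s(u,c)}).edgeSet.ncard)
      (G.deleteEdges {s(u,c)}) rfl hconn'
    rw [hedel] at this
    omega

/-- in a connected unicyclic graph, any two cycles have the same edges -/
lemma cycle_edges_subset (hconn : G.Connected) (huni : G.edgeSet.ncard = Fintype.card V)
    {v u : V} (c : G.Walk v v) (hc : c.IsCycle)
    (d : G.Walk u u) (hd : d.IsCycle) : ∀ e ∈ d.edges, e ∈ c.edges := by
  intro e he
  by_contra hne
  induction e with
  | _ a b =>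
    have hadj : G.Adj a b := Walk.edges_subset_edgeSet d he
    have hconn' := connected_delete_of_cycle_edge hconn d hd hadj he
    -- c survives in the deleted graph
    have hkeep : ∀ f ∈ c.edges, f ∉ ({s(a,b)} : Set (Sym2 V)) := by
      intro f hf
      simp only [Set.mem_singleton_iff]
      rintro rfl
      exact hne hf
    have hc' := @Walk.IsCycle.toDeleteEdges V G v {s(a,b)} c hc hkeep
    have hle := card_le_edges_of_cycle hconn' _ hc'
    rw [edgeSet_deleteEdges] at hle
    have : (G.edgeSet \ {s(a,b)}).ncard + 1 = G.edgeSet.ncard :=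
      Set.ncard_diff_singleton_add_one hadj (G.edgeSet.toFinite)
    have hpos : 1 ≤ Fintype.card V := Fintype.card_pos_iff.mpr hconn.nonempty
    omega

lemma mem_edge_of_mem_support {a b : V} (p : G.Walk a b) (hnil : ¬p.Nil) {z : V}
    (hz : z ∈ p.support) : ∃ e ∈ p.edges, z ∈ e := by
  induction p with
  | nil => simp at hnil
  | @cons a c b h q ih =>
    rw [Walk.support_cons, List.mem_cons] at hz
    rcases hz with rfl | hz
    · exact ⟨s(z, c), by simp, Sym2.mem_mk_left _ _⟩
    · by_cases hq : q.Nil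
      · have h3 : q.length = 0 := (Walk.nil_iff_length_eq).mp hq
        have h2 := q.length_support
        rw [h3] at h2
        have h4 : q.support.tail = [] := by
          rw [q.support_eq_cons] at h2
          simp only [List.length_cons] at h2
          exact List.length_eq_zero_iff.mp (by omega)
        have hsup : q.support = [c] := by rw [q.support_eq_cons, h4]
        rw [hsup, List.mem_singleton] at hz
        subst hz
        exact ⟨s(a, z), by simp, Sym2.mem_mk_right _ _⟩
      · obtain ⟨e, heq, hze⟩ := ih hq hz
        exact ⟨e, by simp [heq], hze⟩
      
lemma cycle_support_iff (hconn : G.Connected) (huni : G.edgeSet.ncard = Fintype.card V)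
    {v u : V} (c : G.Walk v v) (hc : c.IsCycle)
    (d : G.Walk u u) (hd : d.IsCycle) : ∀ z, z ∈ d.support ↔ z ∈ c.support := by
  have key : ∀ {v' u' : V} (c' : G.Walk v' v') (hc' : c'.IsCycle)
      (d' : G.Walk u' u') (hd' : d'.IsCycle) (z : V), z ∈ d'.support → z ∈ c'.support := by
    intro v' u' c' hc' d' hd' z hz
    obtain ⟨e, he, hze⟩ := mem_edge_of_mem_support d' hd'.not_nil hz
    have hec := cycle_edges_subset hconn huni c' hc' d' hd' e he
    obtain ⟨t, rfl⟩ := Sym2.mem_iff_exists.mp hze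
    exact c'.fst_mem_support_of_mem_edges hec
  exact fun z => ⟨key c hc d hd z, key d hd c hc z⟩

end StmtAux

namespace StmtAux
open SimpleGraph Set

variable {V : Type*} [Fintype V] {G : SimpleGraph V}

lemma y_not_in_T (hconn : G.Connected) (huni : G.edgeSet.ncard = Fintype.card V)
    {v : V} (c : G.Walk v v) (hc : c.IsCycle) {x y : V}
    (hx : x ∉ c.support) (hxy : G.Adj x y) :
    y ∉ ((G.deleteEdges {s(x,y)}).connectedComponentMk x).supp := by
  classical
  intro hyT
  rw [ConnectedComponent.mem_supp_iff, ConnectedComponent.eq] at hyT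
  obtain ⟨q⟩ := hyT
  obtain ⟨p, hp⟩ := q.toPath
  have hsub : ∀ f ∈ p.edges, f ∈ G.edgeSet := fun f hf =>
    ((edgeSet_deleteEdges {s(x,y)} (G := G)) ▸ p.edges_subset_edgeSet hf).1
  have hnotin : s(x, y) ∉ p.edges := by
    intro hmem
    have := p.edges_subset_edgeSet hmem
    rw [edgeSet_deleteEdges] at this
    exact this.2 rfl
  set pG := p.transfer G hsub with hpG
  have hpGpath : pG.IsPath := hp.transfer _
  have hcyc : (Walk.cons hxy pG).IsCycle := by
    rw [Walk.cons_isCycle_iff]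
    refine ⟨hpGpath, ?_⟩
    rw [Walk.edges_transfer]
    exact hnotin
  have hxsup : x ∈ (Walk.cons hxy pG).support := Walk.start_mem_support _
  rw [cycle_support_iff hconn huni c hc _ hcyc] at hxsup
  exact hx hxsup

lemma cycle_not_in_T (hconn : G.Connected) (huni : G.edgeSet.ncard = Fintype.card V)
    {v : V} (c : G.Walk v v) (hc : c.IsCycle) {x y : V}
    (hx : x ∉ c.support) (hy : y ∈ c.support) (hxy : G.Adj x y) : ∀ u ∈ c.support,
    u ∉ ((G.deleteEdges {s(x,y)}).connectedComponentMk x).supp := by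
  classical
  intro u hu hT
  have hkeep : ∀ f ∈ c.edges, f ∉ ({s(x,y)} : Set (Sym2 V)) := by
    intro f hf
    simp only [Set.mem_singleton_iff]
    rintro rfl
    exact hx (c.fst_mem_support_of_mem_edges hf)
  set cH := c.toDeleteEdges {s(x,y)} hkeep with hcH
  have hsupeq : cH.support = c.support := Walk.support_transfer _ _
  have hreach : ∀ z ∈ c.support, (G.deleteEdges {s(x,y)}).Reachable v z := by
    intro z hz
    rw [← hsupeq] at hz
    exact ⟨cH.takeUntil z hz⟩
  have h1 : (G.deleteEdges {s(x,y)}).Reachable y u := (hreach y hy).symm.trans (hreach u hu)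
  have h2 : y ∈ ((G.deleteEdges {s(x,y)}).connectedComponentMk x).supp := by
    rw [ConnectedComponent.mem_supp_iff] at hT ⊢
    rw [ConnectedComponent.eq] at hT ⊢
    exact h1.trans hT
  exact y_not_in_T hconn huni c hc hx hxy h2

lemma cross_edge (hconn : G.Connected) (huni : G.edgeSet.ncard = Fintype.card V)
    {v : V} (c : G.Walk v v) (hc : c.IsCycle) {x y : V}
    (hx : x ∉ c.support) (hxy : G.Adj x y) {a b : V}
    (haT : a ∈ ((G.deleteEdges {s(x,y)}).connectedComponentMk x).supp)
    (hbT : b ∉ ((G.deleteEdges {s(x,y)}).connectedComponentMk x).supp) (hab : G.Adj a b) :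
    a = x ∧ b = y := by
  by_cases he : s(a, b) = s(x, y)
  · rw [Sym2.eq_iff] at he
    rcases he with ⟨rfl, rfl⟩ | ⟨rfl, rfl⟩
    · exact ⟨rfl, rfl⟩
    · exact absurd haT (y_not_in_T hconn huni c hc hx hxy)
  · exfalso
    have hadj : (G.deleteEdges {s(x,y)}).Adj a b :=
      SimpleGraph.deleteEdges_adj.mpr ⟨hab, by simpa using he⟩
    apply hbT
    rw [ConnectedComponent.mem_supp_iff, ConnectedComponent.eq] at haT ⊢
    exact hadj.reachable.symm.trans haT

lemma noCyc_of_missing (hconn : G.Connected) (huni : G.edgeSet.ncard = Fintype.card V)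
    {v : V} (c : G.Walk v v) (hc : c.IsCycle) {A : Set V} {z : V}
    (hz : z ∈ c.support) (hzA : z ∉ A) :
    NoCyc G A := by
  intro u d hd hall
  have : z ∈ d.support := (cycle_support_iff hconn huni d hd c hc z).mp hz
  exact hzA (hall z this)

lemma exists_exit {G : SimpleGraph V} (S : Set V) : ∀ {a b : V} (_ : G.Walk a b),
    a ∉ S → b ∈ S → ∃ x y, x ∉ S ∧ y ∈ S ∧ ∃ (_ : G.Adj x y),
      (G.deleteEdges {s(x,y)}).Reachable a x := by
  intro a b p
  induction p with
  | nil => intro h1 h2; exact absurd h2 h1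
  | @cons a a₁ b h q ih =>
    intro ha hb
    by_cases h₁ : a₁ ∈ S
    · exact ⟨a, a₁, ha, h₁, h, Reachable.refl _⟩
    · obtain ⟨x, y, hxS, hyS, hadj, hreach⟩ := ih h₁ hb
      refine ⟨x, y, hxS, hyS, hadj, ?_⟩
      have hne : s(a, a₁) ∉ ({s(x,y)} : Set (Sym2 V)) := by
        simp only [Set.mem_singleton_iff]
        intro hh
        rw [Sym2.eq_iff] at hh
        rcases hh with ⟨rfl, rfl⟩ | ⟨rfl, rfl⟩
        · exact h₁ hyS
        · exact ha hyS
      exact (SimpleGraph.deleteEdges_adj.mpr ⟨h, hne⟩).reachable.trans hreach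

end StmtAux

namespace StmtAux
open SimpleGraph Set

variable {V : Type*} [Fintype V] {G : SimpleGraph V}

lemma aN_union_le {T : Set V} : aN G univ ≤ aN G T + aN G Tᶜ := by
  obtain ⟨s, -, hsi, hcard⟩ := exists_aN G univ
  have h1 : (s ∩ T).ncard ≤ aN G T := aN_le Set.inter_subset_right (hsi.mono Set.inter_subset_left)
  have h2 : (s \ T).ncard ≤ aN G Tᶜ := by
    refine aN_le ?_ (hsi.mono Set.diff_subset)
    intro z hz
    exact hz.2
  have h3 : (s ∩ T).ncard + (s \ T).ncard = s.ncard :=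
    Set.ncard_inter_add_ncard_diff_eq_ncard s T s.toFinite
  omega

/-- union of independent sets in T and Tᶜ, assuming the only crossing edge is xy
and it is not fully used -/
lemma indep_union (hconn : G.Connected) (huni : G.edgeSet.ncard = Fintype.card V)
    {v : V} (c : G.Walk v v) (hc : c.IsCycle) {x y : V}
    (hx : x ∉ c.support) (hxy : G.Adj x y)
    {s₁ s₂ : Set V} (h₁ : s₁ ⊆ ((G.deleteEdges {s(x,y)}).connectedComponentMk x).supp)
    (h₂ : s₂ ⊆ (((G.deleteEdges {s(x,y)}).connectedComponentMk x).supp)ᶜ)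
    (hi₁ : G.IsIndepSet' s₁) (hi₂ : G.IsIndepSet' s₂)
    (hnotboth : x ∉ s₁ ∨ y ∉ s₂) :
    G.IsIndepSet' (s₁ ∪ s₂) ∧ (s₁ ∪ s₂).ncard = s₁.ncard + s₂.ncard := by
  constructor
  · intro a ha b hb hne hadj
    rcases ha with ha | ha <;> rcases hb with hb | hb
    · exact hi₁ ha hb hne hadj
    · obtain ⟨rfl, rfl⟩ := cross_edge hconn huni c hc hx hxy (h₁ ha) (h₂ hb) hadj
      rcases hnotboth with h | h
      · exact h ha
      · exact h hb
    · obtain ⟨rfl, rfl⟩ := cross_edge hconn huni c hc hx hxy (h₁ hb) (h₂ ha) hadj.symm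
      rcases hnotboth with h | h
      · exact h hb
      · exact h ha
    · exact hi₂ ha hb hne hadj
  · refine Set.ncard_union_eq ?_ s₁.toFinite s₂.toFinite
    exact Set.disjoint_of_subset h₁ h₂ (disjoint_compl_right)

lemma bN_combine (hconn : G.Connected) (huni : G.edgeSet.ncard = Fintype.card V)
    {v : V} (c : G.Walk v v) (hc : c.IsCycle) {x y : V}
    (hx : x ∉ c.support) (hxy : G.Adj x y) :
    bN G (((G.deleteEdges {s(x,y)}).connectedComponentMk x).supp \ {x})
      + bN G ((((G.deleteEdges {s(x,y)}).connectedComponentMk x).supp)ᶜ \ {y}) + 1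
      ≤ bN G univ := by
  set T := ((G.deleteEdges {s(x,y)}).connectedComponentMk x).supp with hT
  have hyT : y ∉ T := y_not_in_T hconn huni c hc hx hxy
  have hxT : x ∈ T := ConnectedComponent.connectedComponentMk_mem
  obtain ⟨F₁, ⟨hF₁e, hF₁v, hF₁d⟩, hc₁⟩ := exists_bN G (T \ {x})
  obtain ⟨F₂, ⟨hF₂e, hF₂v, hF₂d⟩, hc₂⟩ := exists_bN G (Tᶜ \ {y})
  have hdisj12 : ∀ e ∈ F₁, ∀ z, z ∈ e → z ∉ Tᶜ \ {y} := by
    intro e he z hz hmem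
    exact hmem.1 (hF₁v e he z hz).1
  have hxynotin : s(x, y) ∉ F₁ ∪ F₂ := by
    rintro (h | h)
    · exact (hF₁v _ h x (by simp)).2 rfl
    · exact ((hF₂v _ h x (by simp)).1) hxT
  have hFam : Fam G univ (insert s(x, y) (F₁ ∪ F₂)) := by
    refine ⟨?_, fun _ _ _ _ => trivial, ?_⟩
    · rintro e (rfl | h | h)
      · exact hxy
      · exact hF₁e h
      · exact hF₂e h
    · rintro e (rfl | he | he) f (rfl | hf | hf) hef z hze hzf
      · exact hef rfl
      · -- e = s(x,y), f ∈ F₁ : z ∈ {x,y} but f's vertices avoid x, and are in T (y ∉ T)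
        rcases Sym2.mem_iff.mp hze with rfl | rfl
        · exact (hF₁v _ hf z hzf).2 rfl
        · exact hyT (hF₁v _ hf z hzf).1
      · rcases Sym2.mem_iff.mp hze with rfl | rfl
        · exact (hF₂v _ hf z hzf).1 hxT
        · exact (hF₂v _ hf z hzf).2 rfl
      · rcases Sym2.mem_iff.mp hzf with h' | h'
        · subst h'; exact (hF₁v _ he z hze).2 rfl
        · subst h'; exact hyT (hF₁v _ he z hze).1
      · exact hF₁d _ he _ hf hef z hze hzf
      · exact hdisj12 _ he z hze (hF₂v _ hf z hzf)
      · rcases Sym2.mem_iff.mp hzf with h' | h'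
        · subst h'; exact (hF₂v _ he z hze).1 hxT
        · subst h'; exact (hF₂v _ he z hze).2 rfl
      · exact hdisj12 _ hf z hzf (hF₂v _ he z hze)
      · exact hF₂d _ he _ hf hef z hze hzf
  have hd : Disjoint F₁ F₂ := by
    rw [Set.disjoint_left]
    intro e he₁ he₂
    induction e with
    | _ a b => exact ((hF₂v _ he₂ a (by simp)).1) (hF₁v _ he₁ a (by simp)).1
  have hcount : (insert s(x,y) (F₁ ∪ F₂)).ncard = F₁.ncard + F₂.ncard + 1 := by
    rw [Set.ncard_insert_of_notMem hxynotin (F₁ ∪ F₂).toFinite,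
      Set.ncard_union_eq hd F₁.toFinite F₂.toFinite]
  have := bN_le hFam
  omega

/-- The central lemma: in a non-KE unicyclic graph, for each admissible pair (x,y),
the independence number splits and y is avoidable in the complement part. -/
lemma main_split (hconn : G.Connected) (huni : G.edgeSet.ncard = Fintype.card V)
    {v : V} (c : G.Walk v v) (hc : c.IsCycle) {x y : V}
    (hx : x ∉ c.support) (hy : y ∈ c.support) (hxy : G.Adj x y)
    (hsum : aN G univ + bN G univ + 1 = Fintype.card V) :
    aN G univ = aN G ((G.deleteEdges {s(x,y)}).connectedComponentMk x).supp
        + aN G ((((G.deleteEdges {s(x,y)}).connectedComponentMk x).supp)ᶜ)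
      ∧ y ∉ relCore G ((((G.deleteEdges {s(x,y)}).connectedComponentMk x).supp)ᶜ) := by
  set T := ((G.deleteEdges {s(x,y)}).connectedComponentMk x).supp with hTdef
  have hyT : y ∉ T := y_not_in_T hconn huni c hc hx hxy
  have hxT : x ∈ T := ConnectedComponent.connectedComponentMk_mem
  have hyTc : y ∈ Tᶜ := hyT
  -- forest identities
  have hNCx : NoCyc G (T \ {x}) :=
    noCyc_of_missing hconn huni c hc hy (fun h => hyT h.1)
  have hNCy : NoCyc G (Tᶜ \ {y}) :=
    noCyc_of_missing hconn huni c hc hy (fun h => h.2 rfl)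
  have fX : aN G (T \ {x}) + bN G (T \ {x}) = (T \ {x}).ncard :=
    forest_KE _ _ rfl hNCx
  have fY : aN G (Tᶜ \ {y}) + bN G (Tᶜ \ {y}) = (Tᶜ \ {y}).ncard :=
    forest_KE _ _ rfl hNCy
  have hcx : (T \ {x}).ncard + 1 = T.ncard :=
    Set.ncard_diff_singleton_add_one hxT T.toFinite
  have hcy : (Tᶜ \ {y}).ncard + 1 = Tᶜ.ncard :=
    Set.ncard_diff_singleton_add_one hyTc Tᶜ.toFinite
  have hcompl : T.ncard + Tᶜ.ncard = Fintype.card V := by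
    have := Set.ncard_add_ncard_compl T
    rwa [Nat.card_eq_fintype_card] at this
  have hub : aN G univ ≤ aN G T + aN G Tᶜ := aN_union_le
  have hmono1 : aN G (T \ {x}) ≤ aN G T := aN_mono Set.diff_subset
  have hbN := bN_combine hconn huni c hc hx hxy
  rw [← hTdef] at hbN
  -- lower bound : aN T + aN Tᶜ ≤ aN univ + 1
  have hlb : aN G T + aN G Tᶜ ≤ aN G univ + 1 := by
    obtain ⟨s₁, hs₁T, hs₁i, hs₁c⟩ := exists_aN G T
    obtain ⟨s₂, hs₂T, hs₂i, hs₂c⟩ := exists_aN G Tᶜ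
    have hsub : s₁ \ {x} ⊆ T := Set.diff_subset.trans hs₁T
    obtain ⟨hui, huc⟩ := indep_union hconn huni c hc hx hxy hsub hs₂T
      (hs₁i.mono Set.diff_subset) hs₂i (Or.inl (fun h => h.2 rfl))
    have hle : ((s₁ \ {x}) ∪ s₂).ncard ≤ aN G univ := aN_le (Set.subset_univ _) hui
    have h3 : s₁.ncard ≤ (s₁ \ {x}).ncard + 1 := by
      rcases Classical.em (x ∈ s₁) with hxs | hxs
      · rw [Set.ncard_diff_singleton_add_one hxs s₁.toFinite]
      · rw [Set.diff_singleton_eq_self hxs]; omega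
    omega
  by_cases hcase : aN G univ = aN G T + aN G Tᶜ
  · refine ⟨hcase, ?_⟩
    intro hycore
    have hdy : aN G (Tᶜ \ {y}) + 1 = aN G Tᶜ := aN_diff_add_one_of_mem_relCore hycore
    omega
  · exfalso
    have h5 : aN G univ + 1 = aN G T + aN G Tᶜ := by omega
    -- x is in every maximum independent set of T
    have hxcore : x ∈ relCore G T := by
      refine ⟨hxT, ?_⟩
      intro s₁ hs₁
      by_contra hxs
      obtain ⟨s₂, hs₂T, hs₂i, hs₂c⟩ := exists_aN G Tᶜ
      obtain ⟨hui, huc⟩ := indep_union hconn huni c hc hx hxy hs₁.1 hs₂T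
        hs₁.2.1 hs₂i (Or.inl hxs)
      have hle : (s₁ ∪ s₂).ncard ≤ aN G univ := aN_le (Set.subset_univ _) hui
      have := hs₁.2.2
      omega
    have hycore : y ∈ relCore G Tᶜ := by
      refine ⟨hyTc, ?_⟩
      intro s₂ hs₂
      by_contra hys
      obtain ⟨s₁, hs₁T, hs₁i, hs₁c⟩ := exists_aN G T
      obtain ⟨hui, huc⟩ := indep_union hconn huni c hc hx hxy hs₁T hs₂.1
        hs₁i hs₂.2.1 (Or.inr hys)
      have hle : (s₁ ∪ s₂).ncard ≤ aN G univ := aN_le (Set.subset_univ _) hui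
      have := hs₂.2.2
      omega
    have hdx : aN G (T \ {x}) + 1 = aN G T := aN_diff_add_one_of_mem_relCore hxcore
    have hdy : aN G (Tᶜ \ {y}) + 1 = aN G Tᶜ := aN_diff_add_one_of_mem_relCore hycore
    omega

end StmtAux

namespace StmtAux
open SimpleGraph Set

variable {V : Type*} [Fintype V] {G : SimpleGraph V}

lemma treeComp_eq_induce {x y : V}
    (hyT : y ∉ ((G.deleteEdges {s(x,y)}).connectedComponentMk x).supp) :
    treeComp G x y = G.induce ((G.deleteEdges {s(x,y)}).connectedComponentMk x).supp := by
  unfold treeComp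
  ext a b
  show (G.deleteEdges {s(x,y)}).Adj ↑a ↑b ↔ G.Adj ↑a ↑b
  rw [SimpleGraph.deleteEdges_adj]
  constructor
  · exact fun h => h.1
  · intro h
    refine ⟨h, ?_⟩
    simp only [Set.mem_singleton_iff]
    intro he
    rw [Sym2.eq_iff] at he
    rcases he with ⟨h1, h2⟩ | ⟨h1, h2⟩
    · have hb := b.2
      rw [h2] at hb
      exact hyT hb
    · have ha := a.2
      rw [h1] at ha
      exact hyT ha

lemma treeComp_core (hconn : G.Connected) (huni : G.edgeSet.ncard = Fintype.card V)
    {v : V} (c : G.Walk v v) (hc : c.IsCycle) {x y : V}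
    (hx : x ∉ c.support) (hxy : G.Adj x y) :
    Subtype.val '' core (treeComp G x y)
      = relCore G ((G.deleteEdges {s(x,y)}).connectedComponentMk x).supp := by
  rw [treeComp_eq_induce (y_not_in_T hconn huni c hc hx hxy)]
  exact core_induce

end StmtAux


open StmtAux in
theorem stmt18 {V : Type*} [Fintype V] (G : SimpleGraph V)
    (hconn : G.Connected) (huni : G.edgeSet.ncard = Fintype.card V)
    {v : V} (c : G.Walk v v) (hc : c.IsCycle)
    (hsum : indepNum G + matchNum G = Fintype.card V - 1) :
    core G = {w : V | ∃ x y : V, x ∉ c.support ∧ y ∈ c.support ∧ G.Adj x y ∧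
      w ∈ Subtype.val '' core (treeComp G x y)} := by
  have hn : 1 ≤ Fintype.card V := Fintype.card_pos_iff.mpr hconn.nonempty
  have huniv : (Set.univ : Set V).ncard = Fintype.card V := by
    rw [Set.ncard_univ, Nat.card_eq_fintype_card]
  have hsum' : aN G Set.univ + bN G Set.univ + 1 = Fintype.card V := by
    rw [indepNum_eq_aN, matchNum_eq_bN] at hsum
    have hle : aN G Set.univ ≤ (Set.univ : Set V).ncard := aN_le_ncard
    omega
  ext w
  simp only [Set.mem_setOf_eq]
  constructor
  · intro hw
    rw [core_eq_relCore] at hw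
    by_cases hwc : w ∈ c.support
    · exfalso
      have hNC : NoCyc G (Set.univ \ {w}) :=
        noCyc_of_missing hconn huni c hc hwc (fun h => h.2 rfl)
      have f0 : aN G (Set.univ \ {w}) + bN G (Set.univ \ {w}) = (Set.univ \ {w}).ncard :=
        forest_KE _ _ rfl hNC
      have hcount : ((Set.univ : Set V) \ {w}).ncard + 1 = Fintype.card V := by
        rw [Set.ncard_diff_singleton_add_one (Set.mem_univ w) Set.finite_univ]
        exact huniv
      have hbmono : bN G (Set.univ \ {w}) ≤ bN G Set.univ := bN_mono (Set.subset_univ _)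
      obtain ⟨s, hsA, hsi, hsc⟩ := exists_aN G (Set.univ \ {w})
      have hle2 : s.ncard ≤ aN G Set.univ := aN_le (Set.subset_univ _) hsi
      have hMIS : relMIS G Set.univ s := ⟨Set.subset_univ _, hsi, by omega⟩
      exact (hsA (hw.2 s hMIS)).2 rfl
    · obtain ⟨x, y, hxS, hyS, hadj, hreach⟩ :=
        exists_exit {z | z ∈ c.support} ((hconn w v).some) hwc (c.start_mem_support)
      have hwT : w ∈ ((G.deleteEdges {s(x,y)}).connectedComponentMk x).supp := by
        rw [SimpleGraph.ConnectedComponent.mem_supp_iff]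
        exact SimpleGraph.ConnectedComponent.eq.mpr hreach
      obtain ⟨hsplit, hycore⟩ := main_split hconn huni c hc hxS hyS hadj hsum'
      refine ⟨x, y, hxS, hyS, hadj, ?_⟩
      rw [treeComp_core hconn huni c hc hxS hadj]
      refine ⟨hwT, ?_⟩
      intro s₁ hs₁
      have hyTc : y ∈ (((G.deleteEdges {s(x,y)}).connectedComponentMk x).supp)ᶜ :=
        y_not_in_T hconn huni c hc hxS hadj
      obtain ⟨s₂, hs₂, hys₂⟩ := exists_relMIS_not_mem hyTc hycore
      obtain ⟨hui, huc⟩ := indep_union hconn huni c hc hxS hadj hs₁.1 hs₂.1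
        hs₁.2.1 hs₂.2.1 (Or.inr hys₂)
      have hMIS : relMIS G Set.univ (s₁ ∪ s₂) := by
        refine ⟨Set.subset_univ _, hui, ?_⟩
        rw [huc, hs₁.2.2, hs₂.2.2, ← hsplit]
      rcases hw.2 _ hMIS with hws | hws
      · exact hws
      · exact absurd (hs₂.1 hws) (by simpa using hwT)
  · rintro ⟨x, y, hx, hy, hxy, hwcore⟩
    rw [treeComp_core hconn huni c hc hx hxy] at hwcore
    obtain ⟨hsplit, -⟩ := main_split hconn huni c hc hx hy hxy hsum'
    rw [core_eq_relCore]
    refine ⟨Set.mem_univ w, ?_⟩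
    intro s hs
    set T := ((G.deleteEdges {s(x,y)}).connectedComponentMk x).supp with hT
    have h1 : (s ∩ T).ncard ≤ aN G T :=
      aN_le Set.inter_subset_right (hs.2.1.mono Set.inter_subset_left)
    have h2 : (s \ T).ncard ≤ aN G Tᶜ := by
      refine aN_le ?_ (hs.2.1.mono Set.diff_subset)
      intro z hz
      exact hz.2
    have h3 : (s ∩ T).ncard + (s \ T).ncard = s.ncard :=
      Set.ncard_inter_add_ncard_diff_eq_ncard s T s.toFinite
    have h4 := hs.2.2
    have hMIS : relMIS G T (s ∩ T) :=
      ⟨Set.inter_subset_right, hs.2.1.mono Set.inter_subset_left, by omega⟩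
    exact (hwcore.2 _ hMIS).1
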